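/- Fix λ ≥ 2 and n, and for a uniformly random query position define epochs of sizes λ^1, λ^2, ... going back in time. For a single (read,write) pair with write time w < read time r, the event that the write falls in epoch i while the read falls in an epoch j < i has probability at most min(2λ^{i−1}, r−w)/(n/2), and this probability is 0 unless r − w < 2λ^i. Consequently, summing the contribution of this pair over all i weighted by λ^{-i} gives at most O(1/(nλ)). -/

import Mathlib

/-- Per-pair epoch estimate. The query position `t` is uniform over a set `T` of at
least `n/2` positions; relative to `t`, epoch `i` consists of the `λ^i` updates in
`(t − s i, t − s (i−1)]` where `s k = ∑_{j=1}^k λ^j`. For a write time `w` and a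
later read time `r ≤ t`, the event that `w` falls in epoch `i` while `r` falls in an
epoch `j < i` (i.e. the boundary `t − s (i−1)` lies in `[w, r)`) has probability at
most `min(2λ^{i−1}, r−w)/(n/2)`, is impossible unless `r − w < 2λ^i`, and summing
the contributions over all `i` weighted by `λ^{-i}` gives at most `O(1/(nλ))`. -/
theorem stmt_11 :
    ∃ C : ℝ, 0 < C ∧
      ∀ (lam n : ℕ), 2 ≤ lam → 1 ≤ n →
        ∀ (w r : ℤ), w < r →
          ∀ (T : Finset ℤ), (n : ℝ) / 2 ≤ T.card →
            ∀ (s : ℕ → ℤ), (∀ k, s k = ∑ j ∈ Finset.Icc 1 k, (lam : ℤ) ^ j) →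
              ∀ (E : ℕ → Finset ℤ),
                (∀ i, E i = T.filter fun t =>
                    t - s i < w ∧ w ≤ t - s (i - 1) ∧ t - s (i - 1) < r ∧ r ≤ t) →
                (∀ i : ℕ, 1 ≤ i →
                    ((E i).card : ℝ) / T.card
                      ≤ min (2 * (lam : ℝ) ^ (i - 1)) ((r : ℝ) - w) / ((n : ℝ) / 2)) ∧
                (∀ i : ℕ, 1 ≤ i → 2 * (lam : ℝ) ^ i ≤ (r : ℝ) - w → E i = ∅) ∧
                ∀ K : ℕ,
                  ∑ i ∈ Finset.Icc 1 K, (((E i).card : ℝ) / T.card) * ((lam : ℝ) ^ i)⁻¹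
                    ≤ C / ((n : ℝ) * lam) := by
  refine ⟨12, by norm_num, ?_⟩
  intro lam n hlam hn w r hwr T hT s hs E hE
  have hlamZ : (2 : ℤ) ≤ (lam : ℤ) := by exact_mod_cast hlam
  have hlamR : (2 : ℝ) ≤ (lam : ℝ) := by exact_mod_cast hlam
  have hlam0 : (0 : ℝ) < (lam : ℝ) := by linarith
  have hnR : (1 : ℝ) ≤ (n : ℝ) := by exact_mod_cast hn
  have hn2 : (0 : ℝ) < (n : ℝ) / 2 := by linarith
  have hT0 : (0 : ℝ) < (T.card : ℝ) := lt_of_lt_of_le hn2 hT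
  -- basic facts about s
  have hs0 : s 0 = 0 := by simp [hs]
  have hsucc : ∀ k, s (k + 1) = s k + (lam : ℤ) ^ (k + 1) := by
    intro k
    rw [hs, hs, Finset.sum_Icc_succ_top (by omega)]
  have hpow1 : ∀ k, (1 : ℤ) ≤ (lam : ℤ) ^ k := fun k => one_le_pow₀ (by omega)
  have hsle : ∀ k, s k ≤ 2 * (lam : ℤ) ^ k - 2 := by
    intro k
    induction k with
    | zero => simp [hs0]
    | succ k ih =>
      have h1 : (lam : ℤ) ^ k * 2 ≤ (lam : ℤ) ^ k * lam :=
        mul_le_mul_of_nonneg_left hlamZ (by positivity)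
      have h2 : (lam : ℤ) ^ (k + 1) = (lam : ℤ) ^ k * lam := pow_succ _ _
      rw [hsucc]
      nlinarith [hpow1 k]
  have hs_nonneg : ∀ k, 0 ≤ s k := by
    intro k
    rw [hs]
    exact Finset.sum_nonneg fun j _ => by positivity
  -- membership unfolding
  have hmem : ∀ i t, t ∈ E i ↔ t ∈ T ∧
      (t - s i < w ∧ w ≤ t - s (i - 1) ∧ t - s (i - 1) < r ∧ r ≤ t) := by
    intro i t
    rw [hE]
    exact Finset.mem_filter
  -- card bounds
  have hcard1 : ∀ i, ((E i).card : ℝ) ≤ (r : ℝ) - w := by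
    intro i
    have hsub : E i ⊆ Finset.Ico (w + s (i - 1)) (r + s (i - 1)) := by
      intro t ht
      obtain ⟨-, h⟩ := (hmem i t).mp ht
      rw [Finset.mem_Ico]
      omega
    have h1 : (E i).card ≤ (r + s (i - 1) - (w + s (i - 1))).toNat := by
      rw [← Int.card_Ico]; exact Finset.card_le_card hsub
    have h2 : ((E i).card : ℤ) ≤ r - w := by
      have := Int.toNat_of_nonneg (a := r + s (i - 1) - (w + s (i - 1))) (by omega)
      omega
    exact_mod_cast h2
  have hcard2 : ∀ i, ((E i).card : ℝ) ≤ 2 * (lam : ℝ) ^ (i - 1) := by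
    intro i
    have hsub : E i ⊆ Finset.Ico r (r + s (i - 1)) := by
      intro t ht
      obtain ⟨-, h⟩ := (hmem i t).mp ht
      rw [Finset.mem_Ico]
      omega
    have h1 : (E i).card ≤ (r + s (i - 1) - r).toNat := by
      rw [← Int.card_Ico]; exact Finset.card_le_card hsub
    have h3 : ((E i).card : ℤ) ≤ 2 * (lam : ℤ) ^ (i - 1) := by
      have h2 := hsle (i - 1)
      have h4 := hs_nonneg (i - 1)
      have := Int.toNat_of_nonneg (a := r + s (i - 1) - r) (by omega)
      omega
    exact_mod_cast h3
  -- part 1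
  have part1 : ∀ i : ℕ, 1 ≤ i →
      ((E i).card : ℝ) / T.card
        ≤ min (2 * (lam : ℝ) ^ (i - 1)) ((r : ℝ) - w) / ((n : ℝ) / 2) := by
    intro i _
    have hmin0 : (0 : ℝ) ≤ min (2 * (lam : ℝ) ^ (i - 1)) ((r : ℝ) - w) := by
      apply le_min (by positivity)
      have : (w : ℝ) < r := by exact_mod_cast hwr
      linarith
    exact div_le_div₀ hmin0 (le_min (hcard2 i) (hcard1 i)) hn2 hT
  -- part 2
  have part2 : ∀ i : ℕ, 1 ≤ i → 2 * (lam : ℝ) ^ i ≤ (r : ℝ) - w → E i = ∅ := by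
    intro i _ hle
    have hleZ : 2 * (lam : ℤ) ^ i ≤ r - w := by exact_mod_cast hle
    rw [Finset.eq_empty_iff_forall_notMem]
    intro t ht
    obtain ⟨-, h1, -, -, h4⟩ := (hmem i t).mp ht
    have := hsle i
    omega
  refine ⟨part1, part2, ?_⟩
  -- part 3
  intro K
  have hex : ∃ i : ℕ, r - w < 2 * (lam : ℤ) ^ i := by
    refine ⟨(r - w).toNat, ?_⟩
    have h1 : (r - w).toNat < 2 ^ (r - w).toNat := Nat.lt_two_pow_self (n := (r - w).toNat)
    have h2 : (2 : ℤ) ^ (r - w).toNat ≤ (lam : ℤ) ^ (r - w).toNat :=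
      pow_le_pow_left₀ (by norm_num) hlamZ _
    have h3 : ((r - w).toNat : ℤ) = r - w := Int.toNat_of_nonneg (by omega)
    have h4 : ((r - w).toNat : ℤ) < 2 ^ (r - w).toNat := by exact_mod_cast h1
    omega
  set i0 := Nat.find hex with hi0
  have hP0 : r - w < 2 * (lam : ℤ) ^ i0 := Nat.find_spec hex
  have hP0R : (r : ℝ) - w ≤ 2 * (lam : ℝ) ^ i0 := by
    have : (r : ℝ) - w < 2 * (lam : ℝ) ^ i0 := by exact_mod_cast hP0
    linarith
  have hmin' : ∀ i, i < i0 → 2 * (lam : ℤ) ^ i ≤ r - w := fun i h =>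
    le_of_not_gt (Nat.find_min hex h)
  have hn0 : (n : ℝ) ≠ 0 := by positivity
  have hl0 : (lam : ℝ) ≠ 0 := ne_of_gt hlam0
  -- per-term bound
  have hterm : ∀ i ∈ Finset.Icc 1 K,
      (((E i).card : ℝ) / T.card) * ((lam : ℝ) ^ i)⁻¹
        ≤ (4 / ((n : ℝ) * lam)) *
          ((if i = i0 then 1 else 0) +
            (if i0 + 1 ≤ i then ((1 : ℝ) / 2) ^ (i - (i0 + 1)) else 0)) := by
    intro i hi
    rw [Finset.mem_Icc] at hi
    have hi1 : 1 ≤ i := hi.1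
    have hinv0 : (0 : ℝ) ≤ ((lam : ℝ) ^ i)⁻¹ := by positivity
    have hstep : (((E i).card : ℝ) / T.card) * ((lam : ℝ) ^ i)⁻¹
        ≤ (min (2 * (lam : ℝ) ^ (i - 1)) ((r : ℝ) - w) / ((n : ℝ) / 2)) * ((lam : ℝ) ^ i)⁻¹ :=
      mul_le_mul_of_nonneg_right (part1 i hi1) hinv0
    rcases lt_trichotomy i i0 with hlt | heq | hgt
    · -- E i empty
      have hempty : E i = ∅ := by
        apply part2 i hi1
        have := hmin' i hlt
        exact_mod_cast this
      rw [hempty]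
      simp only [Finset.card_empty, Nat.cast_zero, zero_div, zero_mul]
      have h1 : (0 : ℝ) ≤ (if i = i0 then (1 : ℝ) else 0) := by split <;> norm_num
      have h2 : (0 : ℝ) ≤ (if i0 + 1 ≤ i then ((1 : ℝ) / 2) ^ (i - (i0 + 1)) else 0) := by
        split <;> positivity
      have h3 : (0 : ℝ) ≤ 4 / ((n : ℝ) * lam) := by positivity
      exact mul_nonneg h3 (add_nonneg h1 h2)
    · -- i = i0
      rw [if_pos heq, if_neg (by omega)]
      have hpow : (lam : ℝ) ^ i = (lam : ℝ) ^ (i - 1) * lam := by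
        rw [← pow_succ]
        congr 1
        omega
      have hl1 : ((lam : ℝ) ^ (i - 1)) ≠ 0 := by positivity
      calc (((E i).card : ℝ) / T.card) * ((lam : ℝ) ^ i)⁻¹
          ≤ (min (2 * (lam : ℝ) ^ (i - 1)) ((r : ℝ) - w) / ((n : ℝ) / 2)) * ((lam : ℝ) ^ i)⁻¹ :=
            hstep
        _ ≤ ((2 * (lam : ℝ) ^ (i - 1)) / ((n : ℝ) / 2)) * ((lam : ℝ) ^ i)⁻¹ := by
            gcongr
            exact min_le_left _ _
        _ = 4 / ((n : ℝ) * lam) * (1 + 0) := by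
            rw [hpow]
            field_simp
            ring
    · -- i > i0
      rw [if_neg (by omega), if_pos (by omega)]
      have hd : i0 + 1 + (i - (i0 + 1)) = i := by omega
      have hpow : (lam : ℝ) ^ i = (lam : ℝ) ^ i0 * lam * (lam : ℝ) ^ (i - (i0 + 1)) := by
        rw [← pow_succ, ← pow_add, hd]
      have h2pow : (2 : ℝ) ^ (i - (i0 + 1)) ≤ (lam : ℝ) ^ (i - (i0 + 1)) :=
        pow_le_pow_left₀ (by norm_num) hlamR _
      have hl1 : ((lam : ℝ) ^ i0) ≠ 0 := by positivity
      have hl2 : ((lam : ℝ) ^ (i - (i0 + 1))) ≠ 0 := by positivity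
      calc (((E i).card : ℝ) / T.card) * ((lam : ℝ) ^ i)⁻¹
          ≤ ((2 * (lam : ℝ) ^ i0) / ((n : ℝ) / 2)) * ((lam : ℝ) ^ i)⁻¹ := by
            refine le_trans hstep ?_
            gcongr
            exact le_trans (min_le_right _ _) hP0R
        _ = 4 / ((n : ℝ) * lam) * ((lam : ℝ) ^ (i - (i0 + 1)))⁻¹ := by
            rw [hpow]
            field_simp
            ring
        _ ≤ 4 / ((n : ℝ) * lam) * (0 + ((1 : ℝ) / 2) ^ (i - (i0 + 1))) := by
            rw [zero_add]
            have heq2 : ((1 : ℝ) / 2) ^ (i - (i0 + 1)) = ((2 : ℝ) ^ (i - (i0 + 1)))⁻¹ := by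
              rw [one_div, inv_pow]
            rw [heq2]
            apply mul_le_mul_of_nonneg_left _ (by positivity)
            exact inv_anti₀ (by positivity) h2pow
  -- sum the bounds
  calc ∑ i ∈ Finset.Icc 1 K, (((E i).card : ℝ) / T.card) * ((lam : ℝ) ^ i)⁻¹
      ≤ ∑ i ∈ Finset.Icc 1 K, (4 / ((n : ℝ) * lam)) *
          ((if i = i0 then 1 else 0) +
            (if i0 + 1 ≤ i then ((1 : ℝ) / 2) ^ (i - (i0 + 1)) else 0)) :=
        Finset.sum_le_sum hterm
    _ = (4 / ((n : ℝ) * lam)) * ∑ i ∈ Finset.Icc 1 K,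
          ((if i = i0 then 1 else 0) +
            (if i0 + 1 ≤ i then ((1 : ℝ) / 2) ^ (i - (i0 + 1)) else 0)) := by
        rw [Finset.mul_sum]
    _ ≤ (4 / ((n : ℝ) * lam)) * 3 := by
        apply mul_le_mul_of_nonneg_left _ (by positivity)
        rw [Finset.sum_add_distrib]
        have hA : ∑ i ∈ Finset.Icc 1 K, (if i = i0 then (1 : ℝ) else 0) ≤ 1 := by
          rw [Finset.sum_ite_eq' (Finset.Icc 1 K) i0 (fun _ => (1 : ℝ))]
          split <;> norm_num
        have hB : ∑ i ∈ Finset.Icc 1 K,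
            (if i0 + 1 ≤ i then ((1 : ℝ) / 2) ^ (i - (i0 + 1)) else 0) ≤ 2 := by
          rw [← Finset.sum_filter]
          have hsubset : (Finset.Icc 1 K).filter (fun i => i0 + 1 ≤ i)
              ⊆ Finset.Ico (i0 + 1) (K + 1) := by
            intro i hi
            simp only [Finset.mem_filter, Finset.mem_Icc, Finset.mem_Ico] at *
            omega
          calc ∑ i ∈ (Finset.Icc 1 K).filter (fun i => i0 + 1 ≤ i),
                ((1 : ℝ) / 2) ^ (i - (i0 + 1))
              ≤ ∑ i ∈ Finset.Ico (i0 + 1) (K + 1), ((1 : ℝ) / 2) ^ (i - (i0 + 1)) :=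
                Finset.sum_le_sum_of_subset_of_nonneg hsubset (fun i _ _ => by positivity)
            _ = ∑ k ∈ Finset.range (K + 1 - (i0 + 1)), ((1 : ℝ) / 2) ^ (i0 + 1 + k - (i0 + 1)) :=
                Finset.sum_Ico_eq_sum_range _ _ _
            _ = ∑ k ∈ Finset.range (K + 1 - (i0 + 1)), ((1 : ℝ) / 2) ^ k := by
                apply Finset.sum_congr rfl
                intro k _
                congr 1
                omega
            _ ≤ 2 := sum_geometric_two_le _
        linarith
    _ = 12 / ((n : ℝ) * lam) := by ring
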